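/- The minimum of the Flory-Huggins potential F_fh with θ > 2 on (-1,1) is attained at the two symmetric points ±u* where u* ∈ (0,1) is the unique positive solution of ln((1+u)/(1-u)) = θu. -/

import Mathlib

open Real Set

/-- For `θ > 2`, the Flory-Huggins potential on `(-1,1)` attains its minimum at the two
symmetric points `±u*`, where `u* ∈ (0,1)` is the unique positive solution of
`ln((1+u)/(1-u)) = θu`. -/
theorem flory_huggins_minimizers
    (θ : ℝ) (hθ : 2 < θ) (F : ℝ → ℝ)
    (hF : ∀ u, F u = (1 + u) * Real.log (1 + u) + (1 - u) * Real.log (1 - u) - θ / 2 * u ^ 2) :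
    ∃ ustar : ℝ, ustar ∈ Set.Ioo (0 : ℝ) 1 ∧
      Real.log ((1 + ustar) / (1 - ustar)) = θ * ustar ∧
      (∀ v ∈ Set.Ioo (0 : ℝ) 1, Real.log ((1 + v) / (1 - v)) = θ * v → v = ustar) ∧
      (∀ v ∈ Set.Ioo (-1 : ℝ) 1, F ustar ≤ F v) ∧
      F (-ustar) = F ustar := by
  have hθ0 : (0:ℝ) < θ := by linarith
  set g : ℝ → ℝ := fun u => Real.log (1+u) - Real.log (1-u) - θ*u with hgdef
  -- derivative of g
  have hg : ∀ u ∈ Ioo (-1:ℝ) 1, HasDerivAt g (1/(1+u) + 1/(1-u) - θ) u := by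
    intro u hu
    have h1 : (0:ℝ) < 1 + u := by linarith [hu.1]
    have h2 : (0:ℝ) < 1 - u := by linarith [hu.2]
    have d1 : HasDerivAt (fun u : ℝ => Real.log (1+u)) (1/(1+u)) u := by
      have := ((hasDerivAt_id u).const_add 1).log h1.ne'
      simpa using this
    have d2 : HasDerivAt (fun u : ℝ => Real.log (1-u)) (-(1/(1-u))) u := by
      have := ((hasDerivAt_id u).const_sub 1).log h2.ne'
      simpa [neg_div] using this
    have := (d1.sub d2).sub ((hasDerivAt_id u).const_mul θ)
    simp [sub_neg_eq_add, mul_one] at this ⊢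
    exact this
  -- derivative of F
  have hFd : ∀ u ∈ Ioo (-1:ℝ) 1, HasDerivAt F (g u) u := by
    intro u hu
    have h1 : (0:ℝ) < 1 + u := by linarith [hu.1]
    have h2 : (0:ℝ) < 1 - u := by linarith [hu.2]
    have hFfun : F = fun u => (1 + u) * Real.log (1 + u) + (1 - u) * Real.log (1 - u) - θ / 2 * u ^ 2 :=
      funext hF
    have d1 : HasDerivAt (fun u : ℝ => Real.log (1+u)) (1/(1+u)) u := by
      have := ((hasDerivAt_id u).const_add 1).log h1.ne'
      simpa using this
    have d2 : HasDerivAt (fun u : ℝ => Real.log (1-u)) (-(1/(1-u))) u := by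
      have := ((hasDerivAt_id u).const_sub 1).log h2.ne'
      simpa [neg_div] using this
    have e1 : HasDerivAt (fun u : ℝ => 1 + u) 1 u := by
      simpa using (hasDerivAt_id u).const_add 1
    have e2 : HasDerivAt (fun u : ℝ => 1 - u) (-1) u := by
      simpa using (hasDerivAt_id u).const_sub 1
    have e3 : HasDerivAt (fun u : ℝ => θ/2 * u^2) (θ/2 * (2 * u)) u := by
      have := (hasDerivAt_pow 2 u).const_mul (θ/2)
      simpa using this
    have h := ((e1.mul d1).add (e2.mul d2)).sub e3
    rw [hFfun]
    convert h using 1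
    show Real.log (1+u) - Real.log (1-u) - θ*u = _
    field_simp
    ring
    all_goals rfl
  -- u₀ := sqrt(1 - 2/θ), the inflection-type point where g' changes sign
  set u₀ : ℝ := Real.sqrt (1 - 2/θ) with hu₀def
  have h2θ : 0 < 1 - 2/θ := by
    have : 2/θ < 1 := (div_lt_one hθ0).2 hθ
    linarith
  have hu₀sq : u₀^2 = 1 - 2/θ := Real.sq_sqrt h2θ.le
  have hu₀pos : 0 < u₀ := Real.sqrt_pos.2 h2θ
  have hu₀lt1 : u₀ < 1 := by
    rw [hu₀def, Real.sqrt_lt' one_pos]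
    have : 0 < 2/θ := by positivity
    linarith
  have deriv_formula : ∀ x ∈ Ioo (-1:ℝ) 1, deriv g x = 2/(1-x^2) - θ := by
    intro x hx
    have h1 : (0:ℝ) < 1 + x := by linarith [hx.1]
    have h2 : (0:ℝ) < 1 - x := by linarith [hx.2]
    rw [(hg x hx).deriv]
    have h3 : (1:ℝ)-x^2 ≠ 0 := by nlinarith
    have : 1/(1+x) + 1/(1-x) = 2/(1-x^2) := by
      field_simp
      ring
    rw [this]
  -- g strictly decreasing on [0, u₀]
  have ganti : StrictAntiOn g (Icc 0 u₀) := by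
    apply strictAntiOn_of_deriv_neg (convex_Icc 0 u₀)
    · intro x hx
      exact (hg x ⟨by linarith [hx.1], by linarith [hx.2]⟩).continuousAt.continuousWithinAt
    · intro x hx
      rw [interior_Icc] at hx
      have hx1 : x ∈ Ioo (-1:ℝ) 1 := ⟨by linarith [hx.1], by linarith [hx.2]⟩
      rw [deriv_formula x hx1]
      have hxsq : x^2 < 1 - 2/θ := by
        rw [← hu₀sq]; nlinarith [hx.1, hx.2]
      have h3 : 0 < 1 - x^2 := by nlinarith
      have h4 : 2 < θ * (1 - x^2) := by
        have h5 : θ * (2/θ) = 2 := by field_simp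
        nlinarith
      have : 2/(1-x^2) < θ := (div_lt_iff₀ h3).2 (by linarith)
      linarith
  -- g strictly increasing on [u₀, 1)
  have gmono : StrictMonoOn g (Ico u₀ 1) := by
    apply strictMonoOn_of_deriv_pos (convex_Ico u₀ 1)
    · intro x hx
      exact (hg x ⟨by linarith [hx.1], hx.2⟩).continuousAt.continuousWithinAt
    · intro x hx
      rw [interior_Ico] at hx
      have hx1 : x ∈ Ioo (-1:ℝ) 1 := ⟨by linarith [hx.1], hx.2⟩
      rw [deriv_formula x hx1]
      have hxsq : 1 - 2/θ < x^2 := by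
        rw [← hu₀sq]; nlinarith [hx.1, hx.2]
      have h3 : 0 < 1 - x^2 := by nlinarith [hx1.1, hx1.2]
      have h4 : θ * (1 - x^2) < 2 := by
        have h5 : θ * (2/θ) = 2 := by field_simp
        nlinarith
      have : θ < 2/(1-x^2) := (lt_div_iff₀ h3).2 (by linarith)
      linarith
  have hg0 : g 0 = 0 := by simp [hgdef]
  have hgu₀neg : g u₀ < 0 := by
    have := ganti (left_mem_Icc.2 hu₀pos.le) (right_mem_Icc.2 hu₀pos.le) hu₀pos
    rwa [hg0] at this
  -- a point b where g is positive
  set b : ℝ := 1 - Real.exp (-θ) with hbdef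
  have hE0 : 0 < Real.exp (-θ) := Real.exp_pos _
  have hE1 : Real.exp (-θ) < 1 := Real.exp_lt_one_iff.2 (by linarith)
  have hb1 : b < 1 := by simp [hbdef]; linarith
  have hθE : θ * Real.exp (-θ) < 1 := by
    have h1 : θ + 1 ≤ Real.exp θ := Real.add_one_le_exp θ
    have h2 : Real.exp (-θ) = 1 / Real.exp θ := by
      rw [Real.exp_neg]; ring
    rw [h2]
    rw [mul_one_div, div_lt_one (Real.exp_pos θ)]
    linarith
  have hu₀b : u₀ < b := by
    rw [hu₀def]
    rw [Real.sqrt_lt' (by linarith : (0:ℝ) < b)]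
    have hb2 : b^2 = 1 - 2*Real.exp (-θ) + Real.exp (-θ)^2 := by rw [hbdef]; ring
    rw [hb2]
    have key : θ * (2*Real.exp (-θ) - Real.exp (-θ)^2) < 2 := by
      nlinarith [mul_pos (sub_pos.2 hθE) (by linarith : (0:ℝ) < 2 - Real.exp (-θ))]
    have h5 : θ * (2/θ) = 2 := by field_simp
    nlinarith
  have hgb : 0 < g b := by
    have h1b : 1 - b = Real.exp (-θ) := by rw [hbdef]; ring
    have h2b : (1:ℝ) < 1 + b := by
      have : 0 < b := by linarith
      linarith
    have hlog1 : Real.log (1 - b) = -θ := by rw [h1b, Real.log_exp]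
    have hlog2 : 0 < Real.log (1 + b) := Real.log_pos h2b
    have : g b = Real.log (1+b) - Real.log (1-b) - θ*b := rfl
    rw [this, hlog1, hbdef]
    nlinarith
  -- existence of the root by IVT
  have hcont : ContinuousOn g (Icc u₀ b) := by
    intro x hx
    exact (hg x ⟨by linarith [hx.1], by linarith [hx.2]⟩).continuousAt.continuousWithinAt
  have hivt := intermediate_value_Ioo hu₀b.le hcont
  have h0mem : (0:ℝ) ∈ Ioo (g u₀) (g b) := ⟨hgu₀neg, hgb⟩
  obtain ⟨ustar, hustar_mem, hgustar⟩ := hivt h0mem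
  have hus0 : 0 < ustar := lt_trans hu₀pos hustar_mem.1
  have hus1 : ustar < 1 := lt_trans hustar_mem.2 hb1
  have husIoo : ustar ∈ Ioo (-1:ℝ) 1 := ⟨by linarith, hus1⟩
  -- g v < 0 for v ∈ (0, u₀]
  have gneg : ∀ v ∈ Ioc (0:ℝ) u₀, g v < 0 := by
    intro v hv
    have := ganti (left_mem_Icc.2 hu₀pos.le) ⟨hv.1.le, hv.2⟩ hv.1
    rwa [hg0] at this
  -- g v ≤ 0 on [0, ustar], g v ≥ 0 on [ustar, 1)
  have husIco : ustar ∈ Ico u₀ 1 := ⟨hustar_mem.1.le, hus1⟩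
  have gle : ∀ v ∈ Ioo (0:ℝ) ustar, g v < 0 := by
    intro v hv
    by_cases h : v ≤ u₀
    · exact gneg v ⟨hv.1, h⟩
    · push_neg at h
      have := gmono ⟨h.le, by linarith [hv.2]⟩ husIco hv.2
      rwa [hgustar] at this
  have gge : ∀ v ∈ Ioo ustar 1, 0 < g v := by
    intro v hv
    have := gmono husIco ⟨by linarith [hv.1, hustar_mem.1], hv.2⟩ hv.1
    rwa [hgustar] at this
  -- helper: the equation in the statement is g = 0
  have heq : ∀ v ∈ Ioo (0:ℝ) 1,
      (Real.log ((1 + v) / (1 - v)) = θ * v ↔ g v = 0) := by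
    intro v hv
    have h1 : (0:ℝ) < 1 + v := by linarith [hv.1]
    have h2 : (0:ℝ) < 1 - v := by linarith [hv.2]
    rw [Real.log_div h1.ne' h2.ne']
    constructor
    · intro h; simp only [hgdef]; linarith
    · intro h; simp only [hgdef] at h; linarith
  have husIoo01 : ustar ∈ Ioo (0:ℝ) 1 := ⟨hus0, hus1⟩
  -- evenness of F
  have Feven : ∀ u, F (-u) = F u := by
    intro u; rw [hF, hF]; ring
  -- F antitone on [0, ustar]
  have Fanti : AntitoneOn F (Icc 0 ustar) := by
    apply antitoneOn_of_deriv_nonpos (convex_Icc 0 ustar)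
    · intro x hx
      exact (hFd x ⟨by linarith [hx.1], by linarith [hx.2, hus1]⟩).continuousAt.continuousWithinAt
    · intro x hx
      rw [interior_Icc] at hx
      exact (hFd x ⟨by linarith [hx.1], by linarith [hx.2, hus1]⟩).differentiableAt.differentiableWithinAt
    · intro x hx
      rw [interior_Icc] at hx
      rw [(hFd x ⟨by linarith [hx.1], by linarith [hx.2, hus1]⟩).deriv]
      exact (gle x hx).le
  -- F monotone on [ustar, 1)
  have Fmono : MonotoneOn F (Ico ustar 1) := by
    apply monotoneOn_of_deriv_nonneg (convex_Ico ustar 1)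
    · intro x hx
      exact (hFd x ⟨by linarith [hx.1], hx.2⟩).continuousAt.continuousWithinAt
    · intro x hx
      rw [interior_Ico] at hx
      exact (hFd x ⟨by linarith [hx.1], hx.2⟩).differentiableAt.differentiableWithinAt
    · intro x hx
      rw [interior_Ico] at hx
      rw [(hFd x ⟨by linarith [hx.1], hx.2⟩).deriv]
      exact (gge x hx).le
  have key : ∀ v ∈ Ico (0:ℝ) 1, F ustar ≤ F v := by
    intro v hv
    rcases le_or_gt v ustar with h | h
    · exact Fanti ⟨hv.1, h⟩ ⟨hus0.le, le_refl _⟩ h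
    · exact Fmono ⟨le_refl _, hus1⟩ ⟨h.le, hv.2⟩ h.le
  refine ⟨ustar, husIoo01, (heq ustar husIoo01).2 hgustar, ?_, ?_, Feven ustar⟩
  · intro v hv hveq
    have hgv : g v = 0 := (heq v hv).1 hveq
    by_cases h : v ≤ u₀
    · exact absurd hgv (gneg v ⟨hv.1, h⟩).ne
    · push_neg at h
      exact gmono.injOn ⟨h.le, hv.2⟩ husIco (by rw [hgv, hgustar])
  · intro v hv
    rcases le_or_gt 0 v with h | h
    · exact key v ⟨h, hv.2⟩
    · rw [← Feven v]
      exact key (-v) ⟨by linarith, by linarith [hv.1]⟩
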